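/- Fix a constraint C and let α be an implementable local compromiser assignment for C that satisfies forward consistency. If α′ is a local compromiser assignment for C with α′(x) ⊆ α(x) for every allocation x, then α′ is implementable and LP_{α′} = LP_α. -/
import Mathlib


/- Common framework: constrained allocation, local priority mechanisms
   (Root & Ahn, "Local Priority Mechanisms"). Agents `N`, objects `O`.
   A strict preference is encoded as a `LinearOrder` on `O`, where
   `pi.lt b a` means `a` is strictly preferred to `b`. -/

open Classical

noncomputable section

variable {N O : Type}

/-- `a` is strictly preferred to `b` under `pi`. -/
def sPref (pi : LinearOrder O) (a b : O) : Prop := pi.lt b a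

/-- `a` is weakly preferred to `b` under `pi`. -/
def wPref (pi : LinearOrder O) (a b : O) : Prop := a = b ∨ pi.lt b a

/-- The favourite (top-ranked) object under `pi`. -/
def topObj [Fintype O] [Nonempty O] (pi : LinearOrder O) : O :=
  @Finset.max' O pi Finset.univ Finset.univ_nonempty

/-- `tau1 p` is the allocation assigning each agent her favourite object. -/
def tau1 [Fintype O] [Nonempty O] (p : N → LinearOrder O) : N → O :=
  fun i => topObj (p i)

/-- The strict lower contour set of `a` under `pi`, as a finset. -/
def LCfin [Fintype O] (pi : LinearOrder O) (a : O) : Finset O :=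
  Finset.univ.filter fun b => pi.lt b a

/-- The best element of the strict lower contour set of `a` (junk value `a` if empty). -/
def bestLC [Fintype O] (pi : LinearOrder O) (a : O) : O :=
  if h : (LCfin pi a).Nonempty then @Finset.max' O pi _ h else a

/-- At `x`, no local compromiser has an empty strict lower contour set. -/
def lpNoFail [Fintype O] (α : (N → O) → Set N) (p : N → LinearOrder O) (x : N → O) : Prop :=
  ∀ i ∈ α x, (LCfin (p i) (x i)).Nonempty

/-- One step of the local priority algorithm: all local compromisers move to their
next-favourite object, everyone else stays put. -/
def lpStep [Fintype O] (α : (N → O) → Set N) (p : N → LinearOrder O) (x : N → O) : N → O :=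
  fun k => if k ∈ α x then bestLC (p k) (x k) else x k

/-- The local priority algorithm for `α` at profile `p` terminates (without failure)
returning the feasible allocation `y`. -/
def lpRunsTo [Fintype O] [Nonempty O] (C : Set (N → O)) (α : (N → O) → Set N)
    (p : N → LinearOrder O) (y : N → O) : Prop :=
  ∃ (m : ℕ) (x : ℕ → N → O),
    x 0 = tau1 p ∧
    (∀ t < m, x t ∉ C ∧ lpNoFail α p (x t) ∧ x (t + 1) = lpStep α p (x t)) ∧
    x m = y ∧ y ∈ C

/-- `α` is a local compromiser assignment for the constraint `C`. -/
def IsLCA (C : Set (N → O)) (α : (N → O) → Set N) : Prop :=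
  ∀ x, (x ∉ C → (α x).Nonempty) ∧ (x ∈ C → α x = ∅)

/-- `α` is implementable: the local priority algorithm returns a feasible
allocation (never the failure symbol) on every profile. -/
def lpImplementable [Fintype O] [Nonempty O] (C : Set (N → O)) (α : (N → O) → Set N) : Prop :=
  ∀ p : N → LinearOrder O, ∃ y, lpRunsTo C α p y

/-- `α` is an implementable local compromiser assignment for `C` inducing the mechanism `f`,
i.e. `f = LP_α`. -/
def lpInduces [Fintype O] [Nonempty O] (C : Set (N → O)) (α : (N → O) → Set N)
    (f : (N → LinearOrder O) → N → O) : Prop :=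
  IsLCA C α ∧ ∀ p, lpRunsTo C α p (f p)

/-- The local priority mechanism `LP_α` (well defined whenever `α` is implementable,
since the algorithm is deterministic). -/
def LPmech [Fintype O] [Nonempty O] (C : Set (N → O)) (α : (N → O) → Set N)
    (p : N → LinearOrder O) : N → O :=
  if h : ∃ y, lpRunsTo C α p y then h.choose else fun _ => Classical.arbitrary O

/-- Group strategy-proofness. -/
def GSP (f : (N → LinearOrder O) → N → O) : Prop :=
  ∀ (p p' : N → LinearOrder O) (M : Set N), M.Nonempty → (∀ j ∉ M, p' j = p j) →
    ¬ ((∀ j ∈ M, wPref (p j) (f p' j) (f p j)) ∧ ∃ k ∈ M, sPref (p k) (f p' k) (f p k))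

/-- (Individual) strategy-proofness. -/
def StratProof (f : (N → LinearOrder O) → N → O) : Prop :=
  ∀ (p p' : N → LinearOrder O) (i : N), (∀ j, j ≠ i → p' j = p j) →
    ¬ sPref (p i) (f p' i) (f p i)

/-- Nonbossiness. -/
def Nonbossy (f : (N → LinearOrder O) → N → O) : Prop :=
  ∀ (p p' : N → LinearOrder O) (i : N), (∀ j, j ≠ i → p' j = p j) →
    f p' i = f p i → f p' = f p

/-- Maskin monotonicity. -/
def MaskinMono (f : (N → LinearOrder O) → N → O) : Prop :=
  ∀ p p' : N → LinearOrder O,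
    (∀ (i : N) (b : O), (p i).lt b (f p i) → (p' i).lt b (f p i)) → f p' = f p

/-- Unanimity. -/
def Unanimity [Fintype O] [Nonempty O] (C : Set (N → O))
    (f : (N → LinearOrder O) → N → O) : Prop :=
  ∀ p, tau1 p ∈ C → f p = tau1 p

/-- The Fixed compromiser condition. -/
def FixedComp [Fintype O] [Nonempty O] (C : Set (N → O))
    (f : (N → LinearOrder O) → N → O) : Prop :=
  ∀ μ, μ ∉ C → ∃ i : N, ∀ p, tau1 p = μ → f p i ≠ μ i

/-- `pi'` is obtained from `pi` by moving `c` to the bottom of the ranking. -/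
def MoveBottom (pi pi' : LinearOrder O) (c : O) : Prop :=
  (∀ b, b ≠ c → pi'.lt c b) ∧ (∀ a b, a ≠ c → b ≠ c → (pi'.lt a b ↔ pi.lt a b))

/-- Compromiser invariance. -/
def CompInv [Fintype O] [Nonempty O] (C : Set (N → O))
    (f : (N → LinearOrder O) → N → O) : Prop :=
  ∀ μ, μ ∉ C → ∀ p p' : N → LinearOrder O, tau1 p = μ →
    (∀ i, (∀ q, tau1 q = μ → f q i ≠ μ i) → MoveBottom (p i) (p' i) (μ i)) →
    (∀ i, ¬ (∀ q, tau1 q = μ → f q i ≠ μ i) → p' i = p i) →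
    f p' = f p

/-- Pareto efficiency relative to the constraint `C`. -/
def ParetoEff (C : Set (N → O)) (f : (N → LinearOrder O) → N → O) : Prop :=
  ∀ p, ¬ ∃ ν ∈ C, (∀ i, wPref (p i) (ν i) (f p i)) ∧ ∃ k, sPref (p k) (ν k) (f p k)

/-- `diffSet x y = d(x,y)`, the set of agents on which `x` and `y` differ. -/
def diffSet (x y : N → O) : Set N := {i | x i ≠ y i}

/-- Forward consistency. -/
def ForwardCons (α : (N → O) → Set N) : Prop :=
  ∀ x y : N → O, diffSet x y ⊆ α x → α x \ diffSet x y ⊆ α y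

/-- The sequence of allocations `z 0, …, z m` is acyclic. -/
def AcyclicSeq (z : ℕ → N → O) (m : ℕ) : Prop :=
  ∀ (i : N) (r s t : ℕ), r < s → s < t → t ≤ m → z r i = z t i → z s i = z r i

/-- `x` and `y` are `i`-connected under `α`. -/
def IConn (α : (N → O) → Set N) (i : N) (x y : N → O) : Prop :=
  ∃ m : ℕ, 1 ≤ m ∧ ∃ z : ℕ → N → O,
    z 0 = x ∧ z m = y ∧ AcyclicSeq z m ∧ diffSet (z 0) (z 1) = {i} ∧
    ∀ l < m, diffSet (z l) (z (l + 1)) ⊆ α (z l)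

/-- Backward consistency. -/
def BackCons (C : Set (N → O)) (α : (N → O) → Set N) : Prop :=
  ∀ (i : N) (x y : N → O), x ∉ C → y ∉ C → IConn α i x y →
    ∀ x' : N → O, diffSet x x' ⊆ α y → i ∉ diffSet x x' → i ∈ α x'

/-- The pointwise union of all implementable local compromiser assignments inducing `f`. -/
def alphaUnionAll [Fintype O] [Nonempty O] (C : Set (N → O))
    (f : (N → LinearOrder O) → N → O) : (N → O) → Set N :=
  fun x => {i | ∃ β, lpInduces C β f ∧ i ∈ β x}

end

noncomputable section LPAux

open Relation

variable {N O : Type}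

/-- Move every agent in `S` one step down. -/
def moveSet [Fintype O] (p : N → LinearOrder O) (S : Set N) (x : N → O) : N → O :=
  fun k => if k ∈ S then bestLC (p k) (x k) else x k

/-- One nondeterministic subset step within `α`. -/
def Stp [Fintype O] (C : Set (N → O)) (α : (N → O) → Set N) (p : N → LinearOrder O)
    (x y : N → O) : Prop :=
  x ∉ C ∧ ∃ S : Set N, S.Nonempty ∧ S ⊆ α x ∧ (∀ i ∈ S, (LCfin (p i) (x i)).Nonempty) ∧
    y = moveSet p S x

def phiM [Fintype N] [Fintype O] (p : N → LinearOrder O) (x : N → O) : ℕ :=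
  ∑ i, (LCfin (p i) (x i)).card

lemma bestLC_mem [Fintype O] (pi : LinearOrder O) (a : O)
    (h : (LCfin pi a).Nonempty) : bestLC pi a ∈ LCfin pi a := by
  rw [bestLC, dif_pos h]
  exact Finset.max'_mem _ _

lemma bestLC_lt [Fintype O] (pi : LinearOrder O) (a : O)
    (h : (LCfin pi a).Nonempty) : pi.lt (bestLC pi a) a := by
  have := bestLC_mem pi a h
  rw [LCfin, Finset.mem_filter] at this
  exact this.2

lemma LCfin_ssubset [Fintype O] (pi : LinearOrder O) {a b : O} (h : pi.lt b a) :
    LCfin pi b ⊂ LCfin pi a := by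
  letI := pi
  constructor
  · intro c hc
    rw [LCfin, Finset.mem_filter] at *
    exact ⟨Finset.mem_univ c, lt_trans hc.2 h⟩
  · intro hsub
    have hb : b ∈ LCfin pi a := by
      rw [LCfin, Finset.mem_filter]; exact ⟨Finset.mem_univ b, h⟩
    have hbb := hsub hb
    rw [LCfin, Finset.mem_filter] at hbb
    exact lt_irrefl b hbb.2

lemma Stp_phiM_lt [Fintype N] [Fintype O] {C : Set (N → O)} {α : (N → O) → Set N}
    {p : N → LinearOrder O} {x y : N → O} (h : Stp C α p x y) : phiM p y < phiM p x := by
  obtain ⟨-, S, hne, -, hLC, rfl⟩ := h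
  obtain ⟨i0, hi0⟩ := hne
  apply Finset.sum_lt_sum
  · intro i _
    by_cases hi : i ∈ S
    · have hlt := bestLC_lt (p i) (x i) (hLC i hi)
      simp only [moveSet, if_pos hi]
      exact le_of_lt (Finset.card_lt_card (LCfin_ssubset (p i) hlt))
    · simp only [moveSet, if_neg hi]
      exact le_refl _
  · refine ⟨i0, Finset.mem_univ _, ?_⟩
    have hlt := bestLC_lt (p i0) (x i0) (hLC i0 hi0)
    simp only [moveSet, if_pos hi0]
    exact Finset.card_lt_card (LCfin_ssubset (p i0) hlt)

lemma moveSet_apply_notMem [Fintype O] {p : N → LinearOrder O} {S : Set N} {x : N → O}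
    {i : N} (hi : i ∉ S) : moveSet p S x i = x i := by
  simp [moveSet, hi]

lemma diffSet_moveSet_subset [Fintype O] {p : N → LinearOrder O} {S : Set N} {x : N → O} :
    diffSet x (moveSet p S x) ⊆ S := by
  intro i hi
  by_contra h
  exact hi (moveSet_apply_notMem h).symm

lemma mem_alpha_moveSet [Fintype O] {α : (N → O) → Set N} (hfc : ForwardCons α)
    {p : N → LinearOrder O} {S : Set N} {x : N → O} (hS : S ⊆ α x)
    {i : N} (hiα : i ∈ α x) (hiS : i ∉ S) : i ∈ α (moveSet p S x) := by
  apply hfc x (moveSet p S x) (subset_trans diffSet_moveSet_subset hS)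
  exact ⟨hiα, fun hd => hd (moveSet_apply_notMem hiS).symm⟩

lemma moveSet_moveSet [Fintype O] {p : N → LinearOrder O} {T T' : Set N} {x : N → O}
    (hdisj : ∀ i ∈ T', i ∉ T) :
    moveSet p T' (moveSet p T x) = moveSet p (T ∪ T') x := by
  funext i
  by_cases h' : i ∈ T'
  · simp [moveSet, h', hdisj i h', Set.mem_union]
  · by_cases h : i ∈ T <;> simp [moveSet, h, h', Set.mem_union]

/-- Along any subset-run ending in `C`, every current compromiser has a
nonempty lower contour set. -/
lemma alpha_LC_nonempty [Fintype O] {C : Set (N → O)} {α : (N → O) → Set N}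
    (hfc : ForwardCons α) (hlca : IsLCA C α) {p : N → LinearOrder O} {x y : N → O}
    (hrun : Relation.ReflTransGen (Stp C α p) x y) (hy : y ∈ C) :
    ∀ i ∈ α x, (LCfin (p i) (x i)).Nonempty := by
  induction hrun using Relation.ReflTransGen.head_induction_on with
  | refl =>
    intro i hi
    rw [(hlca y).2 hy] at hi
    exact absurd hi (Set.notMem_empty i)
  | head hstep hrest ih =>
    rename_i a c
    intro i hi
    obtain ⟨haC, S, hSne, hSα, hSLC, rfl⟩ := hstep
    by_cases hiS : i ∈ S
    · exact hSLC i hiS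
    · have hmem := mem_alpha_moveSet (p := p) hfc hSα hi hiS
      have := ih i hmem
      rwa [moveSet_apply_notMem hiS] at this

/-- After moving `T`, the remaining agents of `S` can still move, jointly
reaching the state where all of `S ∪ T` have moved. -/
lemma Stp_residual [Fintype O] {C : Set (N → O)} {α : (N → O) → Set N}
    (hfc : ForwardCons α) (hlca : IsLCA C α) {p : N → LinearOrder O} {x : N → O}
    {S T : Set N} (hSα : S ⊆ α x) (hTα : T ⊆ α x)
    (hSLC : ∀ i ∈ S, (LCfin (p i) (x i)).Nonempty) (hne : (S \ T).Nonempty) :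
    Stp C α p (moveSet p T x) (moveSet p (S ∪ T) x) := by
  have hsub' : S \ T ⊆ α (moveSet p T x) := by
    intro i hi
    exact mem_alpha_moveSet hfc hTα (hSα hi.1) hi.2
  obtain ⟨i0, hi0⟩ := hne
  have hnotC : moveSet p T x ∉ C := by
    intro hCmem
    have hmem : i0 ∈ α (moveSet p T x) := hsub' hi0
    rw [(hlca _).2 hCmem] at hmem
    exact absurd hmem (Set.notMem_empty i0)
  refine ⟨hnotC, S \ T, ⟨i0, hi0⟩, hsub', ?_, ?_⟩
  · intro i hi
    rw [moveSet_apply_notMem hi.2]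
    exact hSLC i hi.1
  · rw [moveSet_moveSet (fun i hi => hi.2)]
    rw [Set.union_diff_self, Set.union_comm]

/-- Semi-confluence of the subset-step relation. -/
lemma Stp_semiconfluent [Fintype N] [Fintype O] {C : Set (N → O)} {α : (N → O) → Set N}
    (hfc : ForwardCons α) (hlca : IsLCA C α) {p : N → LinearOrder O} :
    ∀ (n : ℕ) (x b y : N → O), phiM p x ≤ n → Stp C α p x b →
      Relation.ReflTransGen (Stp C α p) x y → y ∈ C →
      Relation.ReflTransGen (Stp C α p) b y := by
  intro n
  induction n with
  | zero =>
    intro x b y hφ hstep _ _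
    have := Stp_phiM_lt hstep
    omega
  | succ n ih =>
    intro x b y hφ hstep hrun hy
    rcases Relation.ReflTransGen.cases_head hrun with rfl | ⟨c, hxc, hcy⟩
    · exact absurd hy hstep.1
    have hφc : phiM p c ≤ n := by
      have := Stp_phiM_lt hxc
      omega
    obtain ⟨hxC, S, hSne, hSα, hSLC, rfl⟩ := hstep
    obtain ⟨-, T, hTne, hTα, hTLC, rfl⟩ := hxc
    by_cases hST : S = T
    · subst hST; exact hcy
    by_cases hTS : (T \ S) = ∅
    · -- T ⊆ S, so S \ T nonempty; from moveSet T x one reaches moveSet S x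
      have hTsub : T ⊆ S := Set.diff_eq_empty.mp hTS
      have hSTne : (S \ T).Nonempty := by
        rw [Set.nonempty_iff_ne_empty]
        intro hSTe
        exact hST (Set.Subset.antisymm (Set.diff_eq_empty.mp hSTe) hTsub)
      have hres := Stp_residual (C := C) hfc hlca hSα hTα hSLC hSTne
      rw [Set.union_eq_self_of_subset_right hTsub] at hres
      exact ih _ _ y hφc hres hcy hy
    · have hTSne : (T \ S).Nonempty := Set.nonempty_iff_ne_empty.mpr hTS
      have hresb := Stp_residual (C := C) hfc hlca hTα hSα hTLC hTSne
      rw [Set.union_comm] at hresb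
      by_cases hSTe : (S \ T) = ∅
      · -- S ⊆ T: moveSet S x steps directly to moveSet T x
        have hSsub : S ⊆ T := Set.diff_eq_empty.mp hSTe
        rw [Set.union_eq_self_of_subset_left hSsub] at hresb
        exact Relation.ReflTransGen.head hresb hcy
      · have hSTne : (S \ T).Nonempty := Set.nonempty_iff_ne_empty.mpr hSTe
        have hresc := Stp_residual (C := C) hfc hlca hSα hTα hSLC hSTne
        have hd : Relation.ReflTransGen (Stp C α p) (moveSet p (S ∪ T) x) y :=
          ih _ _ y hφc hresc hcy hy
        exact Relation.ReflTransGen.head hresb hd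

/-- Unique feasible endpoint. -/
lemma Stp_reach_unique [Fintype N] [Fintype O] {C : Set (N → O)} {α : (N → O) → Set N}
    (hfc : ForwardCons α) (hlca : IsLCA C α) {p : N → LinearOrder O} {x y y' : N → O}
    (h1 : Relation.ReflTransGen (Stp C α p) x y) (hy : y ∈ C)
    (h2 : Relation.ReflTransGen (Stp C α p) x y') (hy' : y' ∈ C) : y = y' := by
  induction h1 using Relation.ReflTransGen.head_induction_on generalizing y' with
  | refl =>
    rcases Relation.ReflTransGen.cases_head h2 with rfl | ⟨c, hxc, -⟩
    · rfl
    · exact absurd hy hxc.1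
  | head hstep hrest ih =>
    rcases Relation.ReflTransGen.cases_head h2 with rfl | ⟨c, hxc, hcy'⟩
    · exact absurd hy' hstep.1
    · exact ih (Stp_semiconfluent hfc hlca (phiM p _) _ _ _ le_rfl hstep h2 hy') hy'

lemma lpStep_eq_moveSet [Fintype O] (α : (N → O) → Set N) (p : N → LinearOrder O)
    (x : N → O) : lpStep α p x = moveSet p (α x) x := rfl

/-- A run of the local priority algorithm is a subset-run. -/
lemma lpRunsTo_reflTransGen [Fintype O] [Nonempty O] {C : Set (N → O)}
    {α : (N → O) → Set N} (hlca : IsLCA C α) {p : N → LinearOrder O} {y : N → O}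
    (h : lpRunsTo C α p y) : Relation.ReflTransGen (Stp C α p) (tau1 p) y ∧ y ∈ C := by
  obtain ⟨m, x, hx0, hstep, hxm, hyC⟩ := h
  refine ⟨?_, hyC⟩
  have key : ∀ t, t ≤ m → Relation.ReflTransGen (Stp C α p) (tau1 p) (x t) := by
    intro t
    induction t with
    | zero => intro _; rw [hx0]
    | succ t ih =>
      intro ht
      have htm : t < m := by omega
      obtain ⟨hnC, hnf, heq⟩ := hstep t htm
      refine Relation.ReflTransGen.tail (ih (by omega)) ?_
      refine ⟨hnC, α (x t), (hlca _).1 hnC, subset_rfl, hnf, ?_⟩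
      rw [heq, lpStep_eq_moveSet]
  rw [← hxm]
  exact key m le_rfl

/-- The local priority algorithm is deterministic. -/
lemma lpRunsTo_unique [Fintype O] [Nonempty O] {C : Set (N → O)}
    {β : (N → O) → Set N} {p : N → LinearOrder O} {y y' : N → O}
    (h : lpRunsTo C β p y) (h' : lpRunsTo C β p y') : y = y' := by
  obtain ⟨m, x, hx0, hstep, hxm, hyC⟩ := h
  obtain ⟨m', x', hx0', hstep', hxm', hyC'⟩ := h'
  have key : ∀ t, t ≤ m → t ≤ m' → x t = x' t := by
    intro t
    induction t with
    | zero => intro _ _; rw [hx0, hx0']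
    | succ t ih =>
      intro ht ht'
      have e1 := (hstep t (by omega)).2.2
      have e2 := (hstep' t (by omega)).2.2
      rw [e1, e2, ih (by omega) (by omega)]
  have hmm : ¬ m < m' := by
    intro hlt
    have := (hstep' m hlt).1
    rw [← key m le_rfl (le_of_lt hlt), hxm] at this
    exact this hyC
  have hmm' : ¬ m' < m := by
    intro hlt
    have := (hstep m' hlt).1
    rw [key m' (le_of_lt hlt) le_rfl, hxm'] at this
    exact this hyC'
  have : m = m' := by omega
  subst this
  rw [← hxm, ← hxm', key m le_rfl le_rfl]

def stepIt [Fintype O] (C : Set (N → O)) (α' : (N → O) → Set N) (p : N → LinearOrder O)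
    (z : N → O) : N → O :=
  if z ∈ C then z else lpStep α' p z

/-- Main construction: the `α'` algorithm reaches the `α` outcome. -/
lemma lpRunsTo_of_sub [Fintype N] [Fintype O] [Nonempty O] {C : Set (N → O)}
    {α α' : (N → O) → Set N} (hlca : IsLCA C α) (hfc : ForwardCons α)
    (hlca' : IsLCA C α') (hsub : ∀ x, α' x ⊆ α x) {p : N → LinearOrder O} {y : N → O}
    (hy : lpRunsTo C α p y) : lpRunsTo C α' p y := by
  obtain ⟨hrtg, hyC⟩ := lpRunsTo_reflTransGen hlca hy
  have hkey : ∀ z : N → O, z ∉ C → Relation.ReflTransGen (Stp C α p) z y →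
      Stp C α p z (lpStep α' p z) := by
    intro z hC hz
    refine ⟨hC, α' z, (hlca' z).1 hC, hsub z, ?_, rfl⟩
    intro i hi
    exact alpha_LC_nonempty hfc hlca hz hyC i (hsub z hi)
  set g : ℕ → N → O := fun s => (stepIt C α' p)^[s] (tau1 p) with hgdef
  have hg0 : g 0 = tau1 p := rfl
  have hgsucc : ∀ s, g (s + 1) = stepIt C α' p (g s) := by
    intro s
    rw [hgdef]
    exact Function.iterate_succ_apply' (stepIt C α' p) s _
  have inv : ∀ s, Relation.ReflTransGen (Stp C α p) (g s) y := by
    intro s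
    induction s with
    | zero => rw [hg0]; exact hrtg
    | succ s ih =>
      rw [hgsucc s]
      by_cases hC : g s ∈ C
      · rw [stepIt, if_pos hC]; exact ih
      · rw [stepIt, if_neg hC]
        exact Stp_semiconfluent hfc hlca (phiM p (g s)) _ _ _ le_rfl (hkey _ hC ih) ih hyC
  have hterm : ∃ s, g s ∈ C := by
    by_contra hno
    push_neg at hno
    have mono : ∀ s, phiM p (g s) + s ≤ phiM p (g 0) := by
      intro s
      induction s with
      | zero => omega
      | succ s ih =>
        have hstp : Stp C α p (g s) (g (s + 1)) := by
          rw [hgsucc s, stepIt, if_neg (hno s)]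
          exact hkey _ (hno s) (inv s)
        have := Stp_phiM_lt hstp
        omega
    have := mono (phiM p (g 0) + 1)
    omega
  refine ⟨Nat.find hterm, g, hg0, ?_, ?_, hyC⟩
  · intro t ht
    have htC : g t ∉ C := Nat.find_min hterm ht
    refine ⟨htC, ?_, ?_⟩
    · intro i hi
      exact alpha_LC_nonempty hfc hlca (inv t) hyC i (hsub _ hi)
    · rw [hgsucc t, stepIt, if_neg htC]
  · have hmC : g (Nat.find hterm) ∈ C := Nat.find_spec hterm
    rcases Relation.ReflTransGen.cases_head (inv (Nat.find hterm)) with h | ⟨c, hc, -⟩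
    · exact h
    · exact absurd hmC hc.1

end LPAux

/-- Proposition 5: if `α` is implementable and forward consistent and
`α'` is a local compromiser assignment with `α' ⊆ α` pointwise, then `α'` is
implementable and `LP_{α'} = LP_α`. -/
theorem forwardCons_sub_lca_same_mechanism
    {N O : Type} [Fintype N] [Fintype O] [Nonempty O]
    (C : Set (N → O)) (hC : C.Nonempty)
    (α : (N → O) → Set N) (hlca : IsLCA C α)
    (himp : lpImplementable C α) (hfc : ForwardCons α)
    (α' : (N → O) → Set N) (hlca' : IsLCA C α')
    (hsub : ∀ x, α' x ⊆ α x) :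
    lpImplementable C α' ∧ ∀ p, LPmech C α' p = LPmech C α p := by
  have main : ∀ p : N → LinearOrder O, ∃ y, lpRunsTo C α p y ∧ lpRunsTo C α' p y := by
    intro p
    obtain ⟨y, hy⟩ := himp p
    exact ⟨y, hy, lpRunsTo_of_sub hlca hfc hlca' hsub hy⟩
  constructor
  · intro p
    obtain ⟨y, -, hy'⟩ := main p
    exact ⟨y, hy'⟩
  · intro p
    obtain ⟨y, hy, hy'⟩ := main p
    have h1 : ∃ z, lpRunsTo C α' p z := ⟨y, hy'⟩
    have h2 : ∃ z, lpRunsTo C α p z := ⟨y, hy⟩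
    rw [LPmech, dif_pos h1, LPmech, dif_pos h2]
    rw [lpRunsTo_unique h1.choose_spec hy', lpRunsTo_unique h2.choose_spec hy]
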